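/- Let n ≥ 2, let d be a positive integer, and let x = (x₁,…,xₙ) ∈ ℤⁿ be nonzero with g = gcd(x₁,…,xₙ). If d + 1 > 2^{(n−2)/4} · (‖x‖₂ / g)^{1/(n−1)}, then there exists a nonzero c ∈ ℤⁿ with |cᵢ| ≤ d for all i and Σ_{i=1}^n cᵢxᵢ = 0. -/

import Mathlib

open Real


private lemma round_div (P N : ℤ) (hN : 0 < N) : ∃ k : ℤ, 2 * |P - k * N| ≤ N := by
  refine ⟨(2*P + N) / (2*N), ?_⟩
  have h2N : 0 < 2*N := by linarith
  have hr0 : 0 ≤ (2*P + N) % (2*N) := Int.emod_nonneg _ (ne_of_gt h2N)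
  have hr1 : (2*P + N) % (2*N) < 2*N := Int.emod_lt_of_pos _ h2N
  have he : (2*P + N) / (2*N) * (2*N) + (2*P + N) % (2*N) = 2*P + N :=
    Int.ediv_mul_add_emod (2*P + N) (2*N)
  rw [show (2:ℤ) * |P - (2*P + N) / (2*N) * N| = |2*(P - (2*P + N) / (2*N) * N)| by
    rw [abs_mul, abs_of_nonneg (by norm_num : (0:ℤ) ≤ 2)]]
  rw [abs_le]
  constructor <;> nlinarith


set_option maxHeartbeats 2000000 in
private lemma three_core (a b c d : ℤ) (hd : 0 < d)
    (ha : a ≠ 0) (hb : b ≠ 0) (hc : c ≠ 0)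
    (hco : Int.gcd a (Int.gcd b c) = 1)
    (hQ : 2*(a^2+b^2+c^2) < (d+1)^4) :
    ∃ u v w : ℤ, ¬(u = 0 ∧ v = 0 ∧ w = 0) ∧ |u| ≤ d ∧ |v| ≤ d ∧ |w| ≤ d ∧
      u*a + v*b + w*c = 0 := by
  have hgbc : 0 < Int.gcd b c := Int.gcd_pos_of_ne_zero_left c hb
  set G : ℤ := (Int.gcd b c : ℤ) with hGdef
  have hGpos : 0 < G := by rw [hGdef]; exact_mod_cast hgbc
  obtain ⟨b', hb'⟩ : G ∣ b := Int.gcd_dvd_left b c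
  obtain ⟨c', hc'⟩ : G ∣ c := Int.gcd_dvd_right b c
  have hb'0 : b' ≠ 0 := by rintro rfl; simp at hb'; exact hb hb'
  have hc'0 : c' ≠ 0 := by rintro rfl; simp at hc'; exact hc hc'
  set s : ℤ := Int.gcdA b c with hsdef
  set t : ℤ := Int.gcdB b c with htdef
  have hst : G = b * s + c * t := Int.gcd_eq_gcd_ab b c
  have hsbtc : s * b' + t * c' = 1 := by
    have h1 : G * (s * b' + t * c') = G * 1 := by linear_combination -hst - s*hb' - t*hc'
    exact mul_left_cancel₀ (ne_of_gt hGpos) h1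
  have hGa : IsCoprime (a:ℤ) G := by
    rw [Int.isCoprime_iff_gcd_eq_one]
    simpa using hco
  have hb'c' : IsCoprime c' b' := by
    rw [Int.isCoprime_iff_gcd_eq_one]
    have h1 : b / G = b' := by rw [hb']; exact Int.mul_ediv_cancel_left _ (ne_of_gt hGpos)
    have h2 : c / G = c' := by rw [hc']; exact Int.mul_ediv_cancel_left _ (ne_of_gt hGpos)
    have h3 := Int.gcd_div_gcd_div_gcd (i := b) (j := c) hgbc
    rw [← hGdef, h1, h2] at h3
    rw [Int.gcd_comm]; exact h3
  -- decomposition of any vector in the lattice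
  have decomp : ∀ p q r : ℤ, p*a + q*b + r*c = 0 →
      ∃ α β : ℤ, p = β*G ∧ q = α*c' - β*(s*a) ∧ r = -(α*b') - β*(t*a) := by
    intro p q r hz
    have hdvd : G ∣ p := by
      have h1 : G ∣ p * a := ⟨-(q*b' + r*c'), by linear_combination hz - q*hb' - r*hc'⟩
      exact (hGa.symm).dvd_of_dvd_mul_right h1
    obtain ⟨β, hβ⟩ := hdvd
    have hkey : β*a + q*b' + r*c' = 0 := by
      have h1 : G * (β*a + q*b' + r*c') = 0 := by
        linear_combination hz - a*hβ - q*hb' - r*hc'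
      exact (mul_eq_zero.mp h1).resolve_left (ne_of_gt hGpos)
    obtain ⟨α, hα⟩ : c' ∣ q + β*(s*a) := by
      have h2 : c' ∣ (q + β*(s*a)) * b' := ⟨-(r + β*(t*a)),
        by linear_combination hkey + β*a*hsbtc⟩
      exact hb'c'.dvd_of_dvd_mul_right h2
    refine ⟨α, β, by linear_combination hβ, by linear_combination hα, ?_⟩
    have h5 : c' * (r + β*(t*a) + α*b') = 0 := by
      linear_combination hkey - b'*hα + β*a*hsbtc
    have h6 := (mul_eq_zero.mp h5).resolve_left hc'0
    linarith
  -- minimal nonzero lattice vector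
  classical
  set S : Set ℕ := {m | ∃ p q r : ℤ, ¬(p = 0 ∧ q = 0 ∧ r = 0) ∧ p*a + q*b + r*c = 0 ∧
    p^2 + q^2 + r^2 = (m:ℤ)} with hSdef
  have hSne : S.Nonempty := by
    refine ⟨(0^2 + c'^2 + (-b')^2).toNat, 0, c', -b', by simp [hc'0], ?_, ?_⟩
    · linear_combination c'*hb' - b'*hc'
    · rw [Int.toNat_of_nonneg (by positivity)]
  obtain ⟨p, q, r, hz0, hzy, hzN⟩ : ∃ p q r : ℤ, ¬(p = 0 ∧ q = 0 ∧ r = 0) ∧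
      p*a + q*b + r*c = 0 ∧ p^2 + q^2 + r^2 = ((sInf S : ℕ) : ℤ) := Nat.sInf_mem hSne
  set N : ℤ := ((sInf S : ℕ) : ℤ) with hNdef
  have hmin : ∀ p' q' r' : ℤ, ¬(p' = 0 ∧ q' = 0 ∧ r' = 0) → p'*a + q'*b + r'*c = 0 →
      N ≤ p'^2 + q'^2 + r'^2 := by
    intro p' q' r' h1 h2
    have hmem : (p'^2 + q'^2 + r'^2).toNat ∈ S :=
      ⟨p', q', r', h1, h2, (Int.toNat_of_nonneg (by positivity)).symm⟩
    have h3 := Nat.sInf_le hmem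
    have h4 : N ≤ ((p'^2 + q'^2 + r'^2).toNat : ℤ) := by rw [hNdef]; exact_mod_cast h3
    rwa [Int.toNat_of_nonneg (by positivity)] at h4
  have hNpos : 0 < N := by
    rcases lt_or_eq_of_le (by positivity : (0:ℤ) ≤ p^2 + q^2 + r^2) with h | h
    · linarith [hzN]
    · exfalso; apply hz0
      refine ⟨sq_eq_zero_iff.mp (le_antisymm ?_ (sq_nonneg p)),
        sq_eq_zero_iff.mp (le_antisymm ?_ (sq_nonneg q)),
        sq_eq_zero_iff.mp (le_antisymm ?_ (sq_nonneg r))⟩ <;>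
        linarith [sq_nonneg p, sq_nonneg q, sq_nonneg r]
  -- decompose the minimal vector; its coefficients are coprime
  obtain ⟨α, β, hp, hq, hr⟩ := decomp p q r hzy
  have hαβ : Int.gcd α β = 1 := by
    set e : ℕ := Int.gcd α β with hedef
    have he0 : e ≠ 0 := by
      intro h0
      obtain ⟨hα0, hβ0⟩ := Int.gcd_eq_zero_iff.mp h0
      exact hz0 ⟨by rw [hp, hβ0]; ring, by rw [hq, hα0, hβ0]; ring, by rw [hr, hα0, hβ0]; ring⟩
    obtain ⟨α₁, hα₁⟩ : (e:ℤ) ∣ α := Int.gcd_dvd_left α β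
    obtain ⟨β₁, hβ₁⟩ : (e:ℤ) ∣ β := Int.gcd_dvd_right α β
    set p₁ : ℤ := β₁*G with hp₁
    set q₁ : ℤ := α₁*c' - β₁*(s*a) with hq₁
    set r₁ : ℤ := -(α₁*b') - β₁*(t*a) with hr₁
    have hpe : p = (e:ℤ) * p₁ := by rw [hp, hβ₁, hp₁]; ring
    have hqe : q = (e:ℤ) * q₁ := by rw [hq, hα₁, hβ₁, hq₁]; ring
    have hre : r = (e:ℤ) * r₁ := by rw [hr, hα₁, hβ₁, hr₁]; ring
    have heZ : (0:ℤ) < (e:ℤ) := by exact_mod_cast Nat.pos_of_ne_zero he0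
    have hz1y : p₁*a + q₁*b + r₁*c = 0 := by
      have h1 : (e:ℤ) * (p₁*a + q₁*b + r₁*c) = 0 := by
        linear_combination hzy - a*hpe - b*hqe - c*hre
      exact (mul_eq_zero.mp h1).resolve_left (ne_of_gt heZ)
    have hz10 : ¬(p₁ = 0 ∧ q₁ = 0 ∧ r₁ = 0) := by
      rintro ⟨h1, h2, h3⟩
      exact hz0 ⟨by rw [hpe, h1]; ring, by rw [hqe, h2]; ring, by rw [hre, h3]; ring⟩
    have h2 := hmin p₁ q₁ r₁ hz10 hz1y
    have h3 : (e:ℤ)^2 * (p₁^2 + q₁^2 + r₁^2) = N := by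
      rw [← hzN, hpe, hqe, hre]; ring
    have hM₁pos : 0 < p₁^2 + q₁^2 + r₁^2 := by linarith
    have he2 : (e:ℤ)^2 ≤ 1 := by
      refine le_of_mul_le_mul_right ?_ hM₁pos
      calc (e:ℤ)^2 * (p₁^2 + q₁^2 + r₁^2) = N := by linear_combination h3
        _ ≤ p₁^2 + q₁^2 + r₁^2 := h2
        _ = 1 * (p₁^2 + q₁^2 + r₁^2) := by ring
    have he2' : e^2 ≤ 1 := by exact_mod_cast he2
    rcases Nat.lt_or_ge e 2 with h|h
    · omega
    · exfalso; have := Nat.pow_le_pow_left h 2; omega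
  -- complete to a basis, reduce, and bound via the Lagrange identity
  have hbez : (1:ℤ) = α * Int.gcdA α β + β * Int.gcdB α β := by
    have := Int.gcd_eq_gcd_ab α β
    rw [hαβ] at this; exact_mod_cast this
  set δ : ℤ := Int.gcdA α β with hδdef
  set γ : ℤ := -(Int.gcdB α β) with hγdef
  have hdet : α*δ - β*γ = 1 := by rw [hδdef, hγdef]; linear_combination -hbez
  set w₁ : ℤ := δ*G with hw₁
  set w₂ : ℤ := γ*c' - δ*(s*a) with hw₂
  set w₃ : ℤ := -(γ*b') - δ*(t*a) with hw₃
  have hwy : w₁*a + w₂*b + w₃*c = 0 := by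
    rw [hw₁, hw₂, hw₃]
    linear_combination (γ*c' - δ*(s*a))*hb' + (-(γ*b') - δ*(t*a))*hc' + (-(δ*G*a))*hsbtc
  obtain ⟨k, hk⟩ := round_div (w₁*p + w₂*q + w₃*r) N hNpos
  set u₁ : ℤ := w₁ - k*p with hu₁
  set u₂ : ℤ := w₂ - k*q with hu₂
  set u₃ : ℤ := w₃ - k*r with hu₃
  have huy : u₁*a + u₂*b + u₃*c = 0 := by
    rw [hu₁, hu₂, hu₃]; linear_combination hwy - k*hzy
  -- cross product identities
  have hx1 : q*u₃ - r*u₂ = -a := by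
    rw [hu₂, hu₃, hw₂, hw₃, hq, hr]
    linear_combination (-a*(s*b'+t*c'))*hdet + (-a)*hsbtc
  have hx2 : r*u₁ - p*u₃ = -b := by
    rw [hu₁, hu₃, hw₁, hw₃, hp, hr]
    linear_combination (-(G*b'))*hdet + hb'
  have hx3 : p*u₂ - q*u₁ = -c := by
    rw [hu₁, hu₂, hw₁, hw₂, hp, hq]
    linear_combination (-(G*c'))*hdet + hc'
  have hu0 : ¬(u₁ = 0 ∧ u₂ = 0 ∧ u₃ = 0) := by
    rintro ⟨h1, h2, h3⟩
    exact hb (by linear_combination hx2 - r*h1 + p*h3)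
  have hMge : N ≤ u₁^2 + u₂^2 + u₃^2 := hmin u₁ u₂ u₃ hu0 huy
  have hdot : p*u₁ + q*u₂ + r*u₃ = (w₁*p + w₂*q + w₃*r) - k*N := by
    rw [hu₁, hu₂, hu₃, ← hzN]; ring
  have hdot2 : 2 * |p*u₁ + q*u₂ + r*u₃| ≤ N := by rw [hdot]; exact hk
  have hlag : a^2 + b^2 + c^2 =
      (p^2+q^2+r^2) * (u₁^2+u₂^2+u₃^2) - (p*u₁ + q*u₂ + r*u₃)^2 := by
    linear_combination (a - (q*u₃ - r*u₂))*hx1 + (b - (r*u₁ - p*u₃))*hx2 +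
      (c - (p*u₂ - q*u₁))*hx3
  have h4D : 4*(p*u₁ + q*u₂ + r*u₃)^2 ≤ N^2 := by
    have habs := mul_self_le_mul_self (by positivity : (0:ℤ) ≤ 2 * |p*u₁ + q*u₂ + r*u₃|) hdot2
    linarith [habs, sq_abs (p*u₁ + q*u₂ + r*u₃)]
  rw [hzN] at hlag
  have hNM : N * N ≤ N * (u₁^2+u₂^2+u₃^2) := mul_le_mul_of_nonneg_left hMge hNpos.le
  have h3N : 3*(N*N) ≤ 4*(a^2+b^2+c^2) := by linarith [hlag, h4D, hNM]
  have hNlt : N < (d+1)^2 := by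
    by_contra hge
    push_neg at hge
    have h5 : (d+1)^2 * (d+1)^2 ≤ N * N := mul_le_mul hge hge (by positivity) hNpos.le
    linarith [h3N, hQ, h5, mul_self_nonneg N]
  have hbound : ∀ z : ℤ, z^2 ≤ N → |z| ≤ d := by
    intro z hz2
    by_contra hlt
    push_neg at hlt
    have h1 : d + 1 ≤ |z| := hlt
    have h2 : (d+1) * (d+1) ≤ |z| * |z| := mul_le_mul h1 h1 (by linarith) (abs_nonneg z)
    linarith [sq_abs z, h2, hz2, hNlt]
  refine ⟨p, q, r, hz0, hbound p ?_, hbound q ?_, hbound r ?_, hzy⟩ <;>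
    linarith [sq_nonneg p, sq_nonneg q, sq_nonneg r, hzN]



private lemma pigeonhole_core (n : ℕ) (d : ℤ) (hd : 0 < d) (y : Fin n → ℤ)
    (hL : d * (∑ i, |y i|) + 1 < (d+1)^n) :
    ∃ c : Fin n → ℤ, c ≠ 0 ∧ (∀ i, |c i| ≤ d) ∧ ∑ i, c i * y i = 0 := by
  classical
  set D : ℕ := d.toNat with hDdef
  have hD : (D:ℤ) = d := Int.toNat_of_nonneg hd.le
  set A : ℤ := ∑ i, d * min (y i) 0 with hA
  set B : ℤ := ∑ i, d * max (y i) 0 with hB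
  have hBA : B - A = d * ∑ i, |y i| := by
    rw [hA, hB, ← Finset.sum_sub_distrib, Finset.mul_sum]
    refine Finset.sum_congr rfl fun i _ => ?_
    rcases le_total (y i) 0 with h | h
    · rw [min_eq_left h, max_eq_right h, abs_of_nonpos h]; ring
    · rw [min_eq_right h, max_eq_left h, abs_of_nonneg h]; ring
  have hmaps : ∀ c : Fin n → Fin (D+1), (c ∈ Finset.univ) →
      (∑ i, (c i : ℤ) * y i) ∈ Finset.Icc A B := by
    intro c _
    have hlow : ∀ i, d * min (y i) 0 ≤ (c i : ℤ) * y i ∧ (c i : ℤ) * y i ≤ d * max (y i) 0 := by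
      intro i
      have h0 : (0:ℤ) ≤ (c i : ℤ) := by positivity
      have h1 : ((c i : ℕ) : ℤ) ≤ D := by exact_mod_cast Nat.le_of_lt_succ (c i).isLt
      rw [hD] at h1
      rcases le_total (y i) 0 with h | h
      · rw [min_eq_left h, max_eq_right h]
        constructor
        · exact mul_le_mul_of_nonpos_right h1 h
        · simpa using mul_nonpos_of_nonneg_of_nonpos h0 h
      · rw [min_eq_right h, max_eq_left h]
        constructor
        · simpa using mul_nonneg h0 h
        · exact mul_le_mul_of_nonneg_right h1 h
    rw [Finset.mem_Icc]
    constructor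
    · exact Finset.sum_le_sum fun i _ => (hlow i).1
    · exact Finset.sum_le_sum fun i _ => (hlow i).2
  have hcard : (Finset.Icc A B).card < (Finset.univ : Finset (Fin n → Fin (D+1))).card := by
    rw [Int.card_Icc, Finset.card_univ, Fintype.card_fun]
    have h1 : B + 1 - A = d * (∑ i, |y i|) + 1 := by rw [← hBA]; ring
    have h2 : ((B + 1 - A).toNat : ℤ) < ((D+1)^n : ℕ) := by
      rcases le_or_gt (B + 1 - A) 0 with h | h
      · rw [Int.toNat_of_nonpos h]; positivity
      · rw [Int.toNat_of_nonneg h.le, h1]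
        push_cast [hD]
        simpa using hL
    rw [Fintype.card_fin, Fintype.card_fin]
    exact_mod_cast h2
  obtain ⟨c₁, -, c₂, -, hne, heq⟩ :=
    Finset.exists_ne_map_eq_of_card_lt_of_maps_to hcard hmaps
  refine ⟨fun i => (c₁ i : ℤ) - (c₂ i : ℤ), ?_, ?_, ?_⟩
  · intro h0
    apply hne
    funext i
    have := congrFun h0 i
    simp only [Pi.zero_apply, sub_eq_zero] at this
    have : (c₁ i : ℕ) = (c₂ i : ℕ) := by exact_mod_cast this
    exact Fin.ext this
  · intro i
    show |(c₁ i : ℤ) - (c₂ i : ℤ)| ≤ d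
    have h0 : (0:ℤ) ≤ (c₁ i : ℤ) := by positivity
    have h0' : (0:ℤ) ≤ (c₂ i : ℤ) := by positivity
    have h1 : ((c₁ i : ℕ) : ℤ) ≤ D := by exact_mod_cast Nat.le_of_lt_succ (c₁ i).isLt
    have h1' : ((c₂ i : ℕ) : ℤ) ≤ D := by exact_mod_cast Nat.le_of_lt_succ (c₂ i).isLt
    rw [hD] at h1 h1'
    rw [abs_le]
    constructor <;> linarith
  · show (∑ i, ((c₁ i : ℤ) - (c₂ i : ℤ)) * y i) = 0
    have : (∑ i, ((c₁ i : ℤ) - (c₂ i : ℤ)) * y i)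
        = (∑ i, (c₁ i : ℤ) * y i) - (∑ i, (c₂ i : ℤ) * y i) := by
      rw [← Finset.sum_sub_distrib]
      exact Finset.sum_congr rfl fun i _ => by ring
    rw [this, heq, sub_self]

private lemma abs_le_of_sq_lt (z d : ℤ) (hd : 0 ≤ d) (h : z^2 < (d+1)^2) : |z| ≤ d := by
  by_contra hlt
  push_neg at hlt
  have h1 : d + 1 ≤ |z| := hlt
  have h2 : (d+1) * (d+1) ≤ |z| * |z| := mul_le_mul h1 h1 (by linarith) (abs_nonneg z)
  nlinarith [sq_abs z]


/-- LLL regime: if `d + 1 > 2^((n-2)/4) · (‖x‖₂ / gcd(x))^(1/(n-1))` then there is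
a nonzero `c ∈ {-d,…,d}ⁿ` with `∑ i, cᵢ xᵢ = 0`. -/
theorem subset_balancing_lll_regime (n : ℕ) (hn : 2 ≤ n)
    (d : ℤ) (hd : 0 < d) (x : Fin n → ℤ) (hx : x ≠ 0)
    (h : (2 : ℝ) ^ (((n : ℝ) - 2) / 4) *
          (Real.sqrt (∑ i, (x i : ℝ) ^ 2) / ((Finset.univ.gcd x : ℤ) : ℝ))
            ^ ((1 : ℝ) / ((n : ℝ) - 1))
        < (d : ℝ) + 1) :
    ∃ c : Fin n → ℤ, c ≠ 0 ∧ (∀ i, |c i| ≤ d) ∧ ∑ i, c i * x i = 0 := by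
  classical
  by_cases hzero : ∃ i, x i = 0
  · obtain ⟨i, hi⟩ := hzero
    refine ⟨fun j => if j = i then 1 else 0, ?_, ?_, ?_⟩
    · intro h0
      have := congrFun h0 i
      simp at this
    · intro j
      by_cases hj : j = i <;> simp [hj] <;> omega
    · have : ∑ j, (if j = i then (1:ℤ) else 0) * x j = x i := by
        simp [ite_mul, Finset.sum_ite_eq']
      rw [this, hi]
  push_neg at hzero
  -- set up the gcd and the primitive vector y
  set g : ℤ := Finset.univ.gcd x with hgdef
  have hgdvd : ∀ i, g ∣ x i := fun i => Finset.gcd_dvd (Finset.mem_univ i)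
  have hgne : g ≠ 0 := by
    rw [hgdef, Ne, Finset.gcd_eq_zero_iff]
    push_neg
    exact ⟨⟨0, by omega⟩, Finset.mem_univ _, hzero _⟩
  have hgnn : 0 ≤ g := by
    rcases le_or_gt 0 g with h' | h'
    · exact h'
    · have h1 := Finset.normalize_gcd (s := (Finset.univ : Finset (Fin n))) (f := x)
      rw [Int.normalize_of_nonpos h'.le] at h1
      rw [hgdef] at *
      linarith
  have hgpos : 0 < g := lt_of_le_of_ne hgnn (Ne.symm hgne)
  have hy' : ∀ i, ∃ yi, x i = g * yi := fun i => (hgdvd i).elim fun yi hyi => ⟨yi, hyi⟩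
  choose y hy using hy'
  have hyne : ∀ i, y i ≠ 0 := by
    intro i h0
    exact hzero i (by rw [hy i, h0, mul_zero])
  set Qy : ℤ := ∑ i, (y i)^2 with hQy
  have hQypos : 0 < Qy := by
    rw [hQy]
    have h1 : ∀ i ∈ Finset.univ, (0:ℤ) ≤ (y i)^2 := fun i _ => sq_nonneg _
    have i0 : Fin n := ⟨0, by omega⟩
    have h3 := hyne i0
    calc (0:ℤ) < (y i0)^2 := by positivity
      _ ≤ ∑ i, (y i)^2 := Finset.single_le_sum h1 (Finset.mem_univ i0)
  -- convert the hypothesis into a clean power inequality over ℝ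
  have hQxQy : (∑ i, (x i : ℝ)^2) = (g:ℝ)^2 * (Qy:ℝ) := by
    rw [hQy]
    push_cast
    rw [Finset.mul_sum]
    refine Finset.sum_congr rfl fun i _ => ?_
    rw [hy i]; push_cast; ring
  have hgR : (0:ℝ) < (g:ℝ) := by exact_mod_cast hgpos
  have hQynn : (0:ℝ) ≤ (Qy:ℝ) := by exact_mod_cast hQypos.le
  have hsqrt : Real.sqrt (∑ i, (x i : ℝ)^2) / (g:ℝ) = Real.sqrt (Qy:ℝ) := by
    rw [hQxQy, Real.sqrt_mul (by positivity), Real.sqrt_sq hgR.le]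
    field_simp
  have hsQy : (0:ℝ) < Real.sqrt (Qy:ℝ) := Real.sqrt_pos.mpr (by exact_mod_cast hQypos)
  rw [hsqrt] at h
  have hn1 : (0:ℝ) < (n:ℝ) - 1 := by
    have : (2:ℝ) ≤ (n:ℝ) := by exact_mod_cast hn
    linarith
  have hcast : ((n-1 : ℕ) : ℝ) = (n:ℝ) - 1 := by
    have h1 : (1:ℕ) ≤ n := by omega
    rw [Nat.cast_sub h1]; norm_num
  have hA : ((2:ℝ) ^ (((n:ℝ) - 2) / 4)) ^ (n-1 : ℕ)
      = 2 ^ ((((n:ℝ) - 2) / 4) * ((n:ℝ)-1)) := by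
    rw [← Real.rpow_natCast ((2:ℝ) ^ (((n:ℝ) - 2) / 4)) (n-1),
      ← Real.rpow_mul (by norm_num), hcast]
  have hB : (Real.sqrt (Qy:ℝ) ^ ((1:ℝ)/((n:ℝ)-1))) ^ (n-1 : ℕ) = Real.sqrt (Qy:ℝ) := by
    rw [← Real.rpow_natCast (Real.sqrt (Qy:ℝ) ^ ((1:ℝ)/((n:ℝ)-1))) (n-1),
      ← Real.rpow_mul hsQy.le, hcast, one_div, inv_mul_cancel₀ (ne_of_gt hn1),
      Real.rpow_one]
  have hK : 2 ^ ((((n:ℝ) - 2) / 4) * ((n:ℝ)-1)) * Real.sqrt (Qy:ℝ)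
      < ((d:ℝ)+1)^(n-1 : ℕ) := by
    have hpos : 0 ≤ (2:ℝ) ^ (((n:ℝ) - 2) / 4)
        * (Real.sqrt (Qy:ℝ)) ^ ((1:ℝ)/((n:ℝ)-1)) := by positivity
    have h1 := pow_lt_pow_left₀ h hpos (n := n-1) (by omega)
    rw [mul_pow, hA, hB] at h1
    exact h1
  have hyx : ∀ c : Fin n → ℤ, (∑ i, c i * y i = 0) → ∑ i, c i * x i = 0 := by
    intro c hc
    have h1 : ∑ i, c i * x i = g * ∑ i, c i * y i := by
      rw [Finset.mul_sum]; exact Finset.sum_congr rfl fun i _ => by rw [hy i]; ring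
    rw [h1, hc, mul_zero]
  by_cases hn2 : n = 2
  · subst hn2
    have hexp : (((2:ℕ):ℝ) - 2) / 4 * (((2:ℕ):ℝ)-1) = 0 := by norm_num
    rw [hexp, Real.rpow_zero, one_mul] at hK
    norm_num at hK
    have hQlt : (Qy:ℝ) < ((d:ℝ)+1)^2 := by
      have h1 := Real.sq_sqrt hQynn
      have h2 := mul_self_lt_mul_self (Real.sqrt_nonneg ((Qy:ℝ))) hK
      nlinarith [h1, h2]
    have hQZ : Qy < (d+1)^2 := by exact_mod_cast hQlt
    have hQy2 : Qy = (y 0)^2 + (y 1)^2 := by rw [hQy, Fin.sum_univ_two]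
    refine ⟨![y 1, -(y 0)], ?_, ?_, ?_⟩
    · intro h0
      exact hyne 1 (by simpa using congrFun h0 0)
    · intro i
      fin_cases i
      · show |y 1| ≤ d
        exact abs_le_of_sq_lt _ _ hd.le (by linarith [sq_nonneg (y 0), hQZ, hQy2])
      · show |(-(y 0))| ≤ d
        rw [abs_neg]
        exact abs_le_of_sq_lt _ _ hd.le (by linarith [sq_nonneg (y 1), hQZ, hQy2])
    · rw [Fin.sum_univ_two]
      simp only [Matrix.cons_val_zero, Matrix.cons_val_one, Matrix.head_cons]
      rw [hy 0, hy 1]; ring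
  by_cases hn3 : n = 3
  · subst hn3
    have hexp : (((3:ℕ):ℝ) - 2) / 4 * (((3:ℕ):ℝ)-1) = 1/2 := by norm_num
    rw [hexp] at hK
    norm_num at hK
    -- hK : 2^(1/2 : ℝ) * √Qy < (d+1)^2
    have h4 : 2*(Qy:ℝ) < (((d:ℝ)+1)^2)^2 := by
      have h1 := pow_lt_pow_left₀ hK (by positivity) (n := 2) two_ne_zero
      have h2 : ((2:ℝ)^((1:ℝ)/2) * Real.sqrt (Qy:ℝ))^2 = 2 * (Qy:ℝ) := by
        rw [mul_pow, ← Real.rpow_natCast ((2:ℝ)^((1:ℝ)/2)) 2,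
          ← Real.rpow_mul (by norm_num)]
        norm_num
        rw [Real.sq_sqrt hQynn]
      rw [h2] at h1
      exact h1
    have h4Z : 2*Qy < (d+1)^4 := by
      have : (((d:ℝ)+1)^2)^2 = ((d:ℝ)+1)^4 := by ring
      rw [this] at h4
      exact_mod_cast h4
    have hco : Int.gcd (y 0) (Int.gcd (y 1) (y 2)) = 1 := by
      set e : ℕ := Int.gcd (y 0) (Int.gcd (y 1) (y 2)) with hedef
      have he0 : (e:ℤ) ∣ y 0 := Int.gcd_dvd_left _ _
      have hei : (e:ℤ) ∣ ((Int.gcd (y 1) (y 2) : ℕ) : ℤ) := Int.gcd_dvd_right _ _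
      have he1 : (e:ℤ) ∣ y 1 := dvd_trans hei (Int.gcd_dvd_left _ _)
      have he2 : (e:ℤ) ∣ y 2 := dvd_trans hei (Int.gcd_dvd_right _ _)
      have hall : ∀ i : Fin 3, (e:ℤ) ∣ y i := by
        intro i; fin_cases i <;> assumption
      have hdg : g * e ∣ g * 1 := by
        rw [mul_one, hgdef]
        refine Finset.dvd_gcd fun i _ => ?_
        rw [hy i]
        exact mul_dvd_mul_left g (hall i)
      have hdvd1 : (e:ℤ) ∣ 1 := (mul_dvd_mul_iff_left hgne).mp hdg
      have : e ∣ 1 := by exact_mod_cast hdvd1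
      exact Nat.dvd_one.mp this
    have hQy3 : Qy = (y 0)^2 + (y 1)^2 + (y 2)^2 := by rw [hQy, Fin.sum_univ_three]
    obtain ⟨u, v, w, hnz, hu, hv, hw, hsum⟩ :=
      three_core (y 0) (y 1) (y 2) d hd (hyne 0) (hyne 1) (hyne 2) hco (by rw [← hQy3]; linarith)
    refine ⟨![u, v, w], ?_, ?_, ?_⟩
    · intro h0
      refine hnz ⟨?_, ?_, ?_⟩
      · simpa using congrFun h0 0
      · simpa using congrFun h0 1
      · simpa using congrFun h0 2
    · intro i; fin_cases i <;> simpa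
    · apply hyx
      rw [Fin.sum_univ_three]
      simp only [Matrix.cons_val_zero, Matrix.cons_val_one, Matrix.head_cons,
        Matrix.cons_val_two, Matrix.tail_cons]
      linarith [hsum]
  -- the remaining case : 4 ≤ n
  have hn4 : 4 ≤ n := by omega
  set L : ℤ := ∑ i, |y i| with hLdef
  have hLnn : 0 ≤ L := Finset.sum_nonneg fun i _ => abs_nonneg _
  have hν : (4:ℝ) ≤ (n:ℝ) := by exact_mod_cast hn4
  have hstep1 : ((n:ℝ)-1)/2 ≤ ((n:ℝ)-2)/4 * ((n:ℝ)-1) := by nlinarith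
  have hmono : (2:ℝ)^(((n:ℝ)-1)/2) ≤ 2^(((n:ℝ)-2)/4*((n:ℝ)-1)) :=
    Real.rpow_le_rpow_of_exponent_le one_le_two hstep1
  have h2n : (n:ℝ) ≤ (2:ℝ)^((n:ℝ)-1) := by
    have h1 : n ≤ 2^(n-1) := by have := Nat.lt_two_pow_self (n := n-1); omega
    calc (n:ℝ) ≤ ((2^(n-1):ℕ):ℝ) := by exact_mod_cast h1
      _ = ((2:ℝ))^((n-1:ℕ)) := by push_cast; ring
      _ = (2:ℝ)^(((n-1:ℕ)):ℝ) := by rw [Real.rpow_natCast]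
      _ = 2^((n:ℝ)-1) := by rw [hcast]
  have hsqrtn : Real.sqrt (n:ℝ) ≤ 2^(((n:ℝ)-1)/2) := by
    have h1 : Real.sqrt (n:ℝ) ≤ Real.sqrt ((2:ℝ)^((n:ℝ)-1)) := Real.sqrt_le_sqrt h2n
    have h2 : Real.sqrt ((2:ℝ)^((n:ℝ)-1)) = 2^(((n:ℝ)-1)/2) := by
      rw [Real.sqrt_eq_rpow, ← Real.rpow_mul (by norm_num : (0:ℝ) ≤ 2)]
      ring_nf
    rwa [h2] at h1
  have hCS : (L:ℝ) ≤ Real.sqrt (n:ℝ) * Real.sqrt (Qy:ℝ) := by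
    rw [← Real.sqrt_mul (by positivity)]
    have hcs2 : ((L:ℝ))^2 ≤ (n:ℝ) * (Qy:ℝ) := by
      have h1 := Finset.sum_mul_sq_le_sq_mul_sq Finset.univ
        (fun _ : Fin n => (1:ℝ)) (fun i => |(y i : ℝ)|)
      simp only [one_pow, one_mul, sq_abs, Finset.sum_const, Finset.card_univ,
        Fintype.card_fin, nsmul_eq_mul, mul_one] at h1
      have h2 : (L:ℝ) = ∑ i, |(y i : ℝ)| := by
        rw [hLdef]
        push_cast
        rfl
      rw [h2, hQy]
      push_cast
      exact h1
    have hLR : (0:ℝ) ≤ (L:ℝ) := by exact_mod_cast hLnn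
    exact (Real.le_sqrt hLR (by positivity)).mpr hcs2
  have hLlt : (L:ℝ) < ((d:ℝ)+1)^(n-1:ℕ) := by
    calc (L:ℝ) ≤ Real.sqrt (n:ℝ) * Real.sqrt (Qy:ℝ) := hCS
      _ ≤ 2^(((n:ℝ)-1)/2) * Real.sqrt (Qy:ℝ) :=
          mul_le_mul_of_nonneg_right hsqrtn (Real.sqrt_nonneg _)
      _ ≤ 2^(((n:ℝ)-2)/4*((n:ℝ)-1)) * Real.sqrt (Qy:ℝ) :=
          mul_le_mul_of_nonneg_right hmono (Real.sqrt_nonneg _)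
      _ < ((d:ℝ)+1)^(n-1:ℕ) := hK
  have hLZ : L < (d+1)^(n-1) := by exact_mod_cast hLlt
  have hL : d * L + 1 < (d+1)^n := by
    have h1 : L + 1 ≤ (d+1)^(n-1) := hLZ
    have h2 : (d+1) * (L+1) ≤ (d+1)*(d+1)^(n-1) :=
      mul_le_mul_of_nonneg_left h1 (by linarith)
    have h3 : (d+1)*(d+1)^(n-1) = (d+1)^n := by
      rw [← pow_succ']
      congr 1
      omega
    have h5 : (d+1)*(L+1) = d*L + d + L + 1 := by ring
    linarith
  obtain ⟨c, hc0, hcb, hcy⟩ := pigeonhole_core n d hd y hL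
  exact ⟨c, hc0, hcb, hyx c hcy⟩
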